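/- Let G be a finite abelian group, let H be a subgroup of G, and let A₁, A₂ ⊆ H with |A₁| = |A₂|. If there exist a PPS(G,H,H) and a PPS(H,A₁,A₂), then there exists a PPS(G,A₁,A₂). -/

import Mathlib

open scoped Classical

/-- `IsPPS A₁ A₂ S`: `S` is a partial partitionable set for the subsets `A₁`, `A₂`
of the abelian group `G`: the multiset of the four elements `x, -x, y, -y` over all
pairs `(x,y) ∈ S` covers each element of `G \ A₁` exactly once (and elements of `A₁`
zero times), and the multiset of the four elements `x+y, -(x+y), x-y, -(x-y)` covers
each element of `G \ A₂` exactly once (and elements of `A₂` zero times). -/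
def IsPPS {G : Type*} [AddCommGroup G] (A₁ A₂ : Set G) (S : Finset (G × G)) : Prop :=
  (∀ z : G, (S.val.bind fun p => ({p.1, -p.1, p.2, -p.2} : Multiset G)).count z
      = if z ∈ A₁ then 0 else 1) ∧
  (∀ z : G, (S.val.bind fun p =>
      ({p.1 + p.2, -(p.1 + p.2), p.1 - p.2, -(p.1 - p.2)} : Multiset G)).count z
      = if z ∈ A₂ then 0 else 1)

/-- An almost partitionable set `APS(v, α, β)`. -/
def IsAPS (v : ℕ) (α β : ZMod v) (S : Finset (ZMod v × ZMod v)) : Prop :=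
  IsPPS ({0, α, -α} : Set (ZMod v)) ({0, β, -β} : Set (ZMod v)) S

/-- A partitionable set `PS(v)`. -/
def IsPS (v : ℕ) (S : Finset (ZMod v × ZMod v)) : Prop :=
  IsPPS ({0} : Set (ZMod v)) ({0} : Set (ZMod v)) S

lemma cnt_mem {G : Type*} [AddCommGroup G] (H : AddSubgroup G) (M : Multiset H)
    (z : G) (hz : z ∈ H) :
    Multiset.count z (M.map Subtype.val) = M.count ⟨z, hz⟩ := by
  have h := Multiset.count_map_eq_count' (Subtype.val) M Subtype.val_injective ⟨z, hz⟩
  convert h using 2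

lemma cnt_notmem {G : Type*} [AddCommGroup G] (H : AddSubgroup G) (M : Multiset H)
    (z : G) (hz : z ∉ H) :
    Multiset.count z (M.map Subtype.val) = 0 := by
  rw [Multiset.count_eq_zero]
  intro hmem
  obtain ⟨b, _, rfl⟩ := Multiset.mem_map.mp hmem
  exact hz b.2

theorem stmt6 {G : Type*} [AddCommGroup G] [Fintype G]
    (H : AddSubgroup G) (A₁ A₂ : Set G)
    (hA₁ : A₁ ⊆ (H : Set G)) (hA₂ : A₂ ⊆ (H : Set G)) (hcard : A₁.ncard = A₂.ncard)
    (hGH : ∃ S : Finset (G × G), IsPPS (H : Set G) (H : Set G) S)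
    (hH : ∃ S : Finset (H × H),
      IsPPS ((Subtype.val ⁻¹' A₁ : Set H)) ((Subtype.val ⁻¹' A₂ : Set H)) S) :
    ∃ S : Finset (G × G), IsPPS A₁ A₂ S := by
  classical
  obtain ⟨S₁, h₁⟩ := hGH
  obtain ⟨S₂, h₂⟩ := hH
  set e : H × H ↪ G × G :=
    ⟨fun p => (p.1.val, p.2.val), by
      intro a b hab
      simp only [Prod.mk.injEq] at hab
      exact Prod.ext (Subtype.ext hab.1) (Subtype.ext hab.2)⟩ with he
  have hdisj : Disjoint S₁ (S₂.map e) := by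
    rw [Finset.disjoint_left]
    intro p hp hp2
    obtain ⟨q, hq, rfl⟩ := Finset.mem_map.mp hp2
    have h0 := h₁.1 (q.1.val)
    rw [if_pos (show (q.1.val : G) ∈ (H : Set G) from q.1.2)] at h0
    have hc : 0 < Multiset.count (q.1.val : G)
        (S₁.val.bind fun p => ({p.1, -p.1, p.2, -p.2} : Multiset G)) := by
      rw [Multiset.count_pos]
      exact Multiset.mem_bind.mpr ⟨e q, hp, by simp [he]; exact Or.inl rfl⟩
    omega
  refine ⟨S₁.disjUnion (S₂.map e) hdisj, ?_, ?_⟩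
  · intro z
    have key : ((S₂.map e).val.bind fun p => ({p.1, -p.1, p.2, -p.2} : Multiset G))
        = Multiset.map Subtype.val
          (S₂.val.bind fun p => ({p.1, -p.1, p.2, -p.2} : Multiset H)) := by
      rw [Finset.map_val, Multiset.bind_map, Multiset.map_bind]
      refine Multiset.bind_congr (fun p _ => ?_)
      simp [he]
      rfl
    rw [show (S₁.disjUnion (S₂.map e) hdisj).val = S₁.val + (S₂.map e).val from rfl,
      Multiset.add_bind, Multiset.count_add, h₁.1 z, key]
    by_cases hz : z ∈ H
    · rw [if_pos (show z ∈ (H : Set G) from hz), cnt_mem H _ z hz, zero_add]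
      convert h₂.1 ⟨z, hz⟩ using 2
      exact Iff.rfl
    · rw [if_neg (show z ∉ (H : Set G) from hz), if_neg (fun h => hz (hA₁ h)),
        cnt_notmem H _ z hz]
  · intro z
    have key : ((S₂.map e).val.bind fun p =>
          ({p.1 + p.2, -(p.1 + p.2), p.1 - p.2, -(p.1 - p.2)} : Multiset G))
        = Multiset.map Subtype.val
          (S₂.val.bind fun p =>
            ({p.1 + p.2, -(p.1 + p.2), p.1 - p.2, -(p.1 - p.2)} : Multiset H)) := by
      rw [Finset.map_val, Multiset.bind_map, Multiset.map_bind]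
      refine Multiset.bind_congr (fun p _ => ?_)
      simp [he]
      rfl
    rw [show (S₁.disjUnion (S₂.map e) hdisj).val = S₁.val + (S₂.map e).val from rfl,
      Multiset.add_bind, Multiset.count_add, h₁.2 z, key]
    by_cases hz : z ∈ H
    · rw [if_pos (show z ∈ (H : Set G) from hz), cnt_mem H _ z hz, zero_add]
      convert h₂.2 ⟨z, hz⟩ using 2
      exact Iff.rfl
    · rw [if_neg (show z ∉ (H : Set G) from hz), if_neg (fun h => hz (hA₂ h)),
        cnt_notmem H _ z hz]
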